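/- arXiv:1602.04661 — 4 statements merged into one kernel-verified Lean document; each statement's English description precedes it below -/
import Mathlib

section
/- Every codeword of the 3rd order Reed-Muller code R(3,7) has Hamming weight divisible by 4; that is, R(3,7) is a doubly-even code. -/
noncomputable section

/-- Evaluation of multivariate polynomials over GF(2) as a linear map. -/
def evalLM (m : ℕ) :
    MvPolynomial (Fin m) (ZMod 2) →ₗ[ZMod 2] ((Fin m → ZMod 2) → ZMod 2) where
  toFun p := fun v => MvPolynomial.eval v p
  map_add' p q := by funext v; simp
  map_smul' c p := by funext v; simp [MvPolynomial.smul_eval]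

/-- The Reed-Muller code R(r,m): evaluation vectors of polynomials of total degree ≤ r. -/
def ReedMuller (r m : ℕ) : Submodule (ZMod 2) ((Fin m → ZMod 2) → ZMod 2) :=
  (MvPolynomial.restrictTotalDegree (Fin m) (ZMod 2) r).map (evalLM m)

/-- The dual code with respect to the standard dot product. -/
def dualCode {ι : Type*} [Fintype ι] (C : Submodule (ZMod 2) (ι → ZMod 2)) :
    Submodule (ZMod 2) (ι → ZMod 2) where
  carrier := {x | ∀ c ∈ C, dotProduct x c = 0}
  add_mem' := by
    intro a b ha hb c hc
    simp only [Set.mem_setOf_eq] at *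
    rw [add_dotProduct, ha c hc, hb c hc, add_zero]
  zero_mem' := by
    intro c hc
    simp [zero_dotProduct]
  smul_mem' := by
    intro a x hx c hc
    simp only [Set.mem_setOf_eq] at *
    rw [smul_dotProduct, hx c hc, smul_zero]

/-- The weight distribution: A_i = number of codewords of Hamming weight i. -/
def wtDist {ι : Type*} [Fintype ι] (C : Submodule (ZMod 2) (ι → ZMod 2)) (i : ℕ) : ℕ :=
  Set.ncard {c : ι → ZMod 2 | c ∈ C ∧ hammingNorm c = i}

/-- The code C has minimum distance d. -/
def IsMinDist {ι : Type*} [Fintype ι] (C : Submodule (ZMod 2) (ι → ZMod 2)) (d : ℕ) : Prop :=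
  (∃ c ∈ C, c ≠ 0 ∧ hammingNorm c = d) ∧ ∀ c ∈ C, c ≠ 0 → d ≤ hammingNorm c

/-- Vectors orthogonal to a fixed vector x. -/
def perpVec {ι : Type*} [Fintype ι] (x : ι → ZMod 2) : Submodule (ZMod 2) (ι → ZMod 2) where
  carrier := {c | dotProduct x c = 0}
  add_mem' := by
    intro a b ha hb
    simp only [Set.mem_setOf_eq] at *
    rw [dotProduct_add, ha, hb, add_zero]
  zero_mem' := by simp [dotProduct_zero]
  smul_mem' := by
    intro a c hc
    simp only [Set.mem_setOf_eq] at *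
    rw [dotProduct_smul, hc, smul_zero]

/-- The automorphism group of a code: coordinate permutations preserving the code. -/
def codeAut {ι : Type*} [Fintype ι] (C : Submodule (ZMod 2) (ι → ZMod 2)) :
    Subgroup (Equiv.Perm ι) where
  carrier := {σ | ∀ c : ι → ZMod 2, c ∈ C ↔ c ∘ σ ∈ C}
  one_mem' := by intro c; rfl
  mul_mem' := by
    intro σ τ hσ hτ c
    exact (hσ c).trans (hτ (c ∘ σ))
  inv_mem' := by
    intro σ hσ c
    have h := hσ (c ∘ ⇑(σ⁻¹))
    have e : (c ∘ ⇑(σ⁻¹)) ∘ ⇑σ = c := by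
      funext v; simp
    rw [e] at h
    exact h.symm


def genVec (m : ℕ) (S : Finset (Fin m)) : (Fin m → ZMod 2) → ZMod 2 :=
  fun v => ∏ i ∈ S, v i

def genSet (r m : ℕ) : Set ((Fin m → ZMod 2) → ZMod 2) :=
  {x | ∃ S : Finset (Fin m), S.card ≤ r ∧ x = genVec m S}

lemma zmod2_cases (x : ZMod 2) : x = 0 ∨ x = 1 := by revert x; decide

lemma zmod2_pow (x : ZMod 2) {n : ℕ} (hn : n ≠ 0) : x ^ n = x := by
  rcases zmod2_cases x with h | h <;> subst h
  · exact zero_pow hn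
  · exact one_pow n

lemma wt_eq_card_filter {ι : Type*} [Fintype ι] (x : ι → ZMod 2) :
    hammingNorm x = (Finset.univ.filter fun i => x i ≠ 0).card := rfl

lemma wt_add {ι : Type*} [Fintype ι] [DecidableEq ι] (a b : ι → ZMod 2) :
    hammingNorm (a + b) + 2 * hammingNorm (a * b) = hammingNorm a + hammingNorm b := by
  have hA : (Finset.univ.filter fun i => (a + b) i ≠ 0)
      = ((Finset.univ.filter fun i => a i ≠ 0) ∪ (Finset.univ.filter fun i => b i ≠ 0))
        \ ((Finset.univ.filter fun i => a i ≠ 0) ∩ (Finset.univ.filter fun i => b i ≠ 0)) := by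
    ext i
    simp only [Finset.mem_filter, Finset.mem_sdiff, Finset.mem_union,
      Finset.mem_inter, Finset.mem_univ, true_and, Pi.add_apply]
    rcases zmod2_cases (a i) with h | h <;> rcases zmod2_cases (b i) with h' | h' <;>
      simp [h, h'] <;> decide
  have hM : (Finset.univ.filter fun i => (a * b) i ≠ 0)
      = (Finset.univ.filter fun i => a i ≠ 0) ∩ (Finset.univ.filter fun i => b i ≠ 0) := by
    ext i
    simp only [Finset.mem_filter, Finset.mem_inter, Finset.mem_univ, true_and,
      Pi.mul_apply]
    exact mul_ne_zero_iff
  rw [wt_eq_card_filter (a + b), wt_eq_card_filter (a * b), wt_eq_card_filter a,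
    wt_eq_card_filter b, hA, hM]
  have h1 := Finset.card_union_add_card_inter (Finset.univ.filter fun i => a i ≠ 0)
    (Finset.univ.filter fun i => b i ≠ 0)
  have h2 : ((Finset.univ.filter fun i => a i ≠ 0) ∩ (Finset.univ.filter fun i => b i ≠ 0))
      ⊆ ((Finset.univ.filter fun i => a i ≠ 0) ∪ (Finset.univ.filter fun i => b i ≠ 0)) :=
    (Finset.inter_subset_left).trans Finset.subset_union_left
  have h3 := Finset.card_le_card h2
  rw [Finset.card_sdiff_of_subset h2]
  omega

lemma genVec_wt {m : ℕ} (S : Finset (Fin m)) :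
    hammingNorm (genVec m S) = 2 ^ (m - S.card) := by
  have h : (Finset.univ.filter fun v : Fin m → ZMod 2 => genVec m S v ≠ 0)
      = (Finset.univ.filter fun v : Fin m → ZMod 2 => ∀ i ∈ S, v i = 1) := by
    ext v
    simp only [Finset.mem_filter, Finset.mem_univ, true_and]
    simp only [genVec]; rw [Finset.prod_ne_zero_iff]
    constructor
    · intro h i hi
      rcases zmod2_cases (v i) with h' | h'
      · exact absurd h' (h i hi)
      · exact h'
    · intro h i hi
      rw [h i hi]; exact one_ne_zero
  have e : {v : Fin m → ZMod 2 // ∀ i ∈ S, v i = 1} ≃ ({i // i ∈ Sᶜ} → ZMod 2) :=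
  { toFun := fun v i => v.1 i.1
    invFun := fun f => ⟨fun i => if h : i ∈ S then 1 else f ⟨i, Finset.mem_compl.mpr h⟩,
      fun i hi => dif_pos hi⟩
    left_inv := fun v => Subtype.ext (funext fun i => by
      by_cases h : i ∈ S
      · simp [h, v.2 i h]
      · simp [h])
    right_inv := fun f => funext fun i => by
      have hi : i.1 ∉ S := Finset.mem_compl.mp i.2
      simp [hi] }
  calc hammingNorm (genVec m S)
      = Fintype.card {v : Fin m → ZMod 2 // ∀ i ∈ S, v i = 1} := by
        rw [wt_eq_card_filter, h, Fintype.card_subtype]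
    _ = Fintype.card ({i // i ∈ Sᶜ} → ZMod 2) := Fintype.card_congr e
    _ = 2 ^ (m - S.card) := by
        rw [Fintype.card_fun]
        simp [Finset.card_compl]

lemma genVec_mul {m : ℕ} (S T : Finset (Fin m)) :
    genVec m S * genVec m T = genVec m (S ∪ T) := by
  funext v
  show (∏ i ∈ S, v i) * ∏ i ∈ T, v i = ∏ i ∈ S ∪ T, v i
  rcases em (∃ i ∈ S ∪ T, v i = 0) with ⟨i, hi, hvi⟩ | h
  · rw [Finset.prod_eq_zero hi hvi]
    rcases Finset.mem_union.mp hi with hi' | hi'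
    · rw [Finset.prod_eq_zero hi' hvi, zero_mul]
    · rw [Finset.prod_eq_zero hi' hvi, mul_zero]
  · push_neg at h
    have h1 : ∀ i ∈ S ∪ T, v i = 1 := by
      intro i hi
      rcases zmod2_cases (v i) with h' | h'
      · exact absurd h' (h i hi)
      · exact h'
    rw [Finset.prod_eq_one h1, Finset.prod_eq_one (fun i hi => h1 i (Finset.mem_union_left _ hi)),
      Finset.prod_eq_one (fun i hi => h1 i (Finset.mem_union_right _ hi)), one_mul]

lemma wt_cast {ι : Type*} [Fintype ι] (x : ι → ZMod 2) :
    ((hammingNorm x : ℕ) : ZMod 2) = ∑ i, x i := by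
  rw [wt_eq_card_filter, ← Finset.sum_filter_ne_zero Finset.univ (f := x)]
  have h1 : ∀ i ∈ (Finset.univ.filter fun i => x i ≠ 0), x i = 1 := by
    intro i hi
    rcases zmod2_cases (x i) with h | h
    · exact absurd h (Finset.mem_filter.mp hi).2
    · exact h
  rw [Finset.sum_congr rfl h1, Finset.sum_const, nsmul_eq_mul, mul_one]

lemma gen_pair_orth (S T : Finset (Fin 7)) (hS : S.card ≤ 3) (hT : T.card ≤ 3) :
    ∑ v, genVec 7 S v * genVec 7 T v = 0 := by
  have h : ∑ v, genVec 7 S v * genVec 7 T v = ∑ v, (genVec 7 S * genVec 7 T) v := rfl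
  rw [h, ← wt_cast, genVec_mul, genVec_wt]
  have hle : (S ∪ T).card ≤ 6 := le_trans (Finset.card_union_le S T) (by omega)
  have h1 : 7 - (S ∪ T).card ≠ 0 := by omega
  rw [Nat.cast_pow, show ((2 : ℕ) : ZMod 2) = 0 from by decide]
  exact zero_pow h1

lemma orth_span :
    ∀ a ∈ Submodule.span (ZMod 2) (genSet 3 7), ∀ b ∈ Submodule.span (ZMod 2) (genSet 3 7),
      ∑ v, a v * b v = 0 := by
  have step1 : ∀ S : Finset (Fin 7), S.card ≤ 3 →
      ∀ b ∈ Submodule.span (ZMod 2) (genSet 3 7), ∑ v, genVec 7 S v * b v = 0 := by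
    intro S hS b hb
    induction hb using Submodule.span_induction with
    | mem x hx =>
      obtain ⟨T, hT, rfl⟩ := hx
      exact gen_pair_orth S T hS hT
    | zero => simp
    | add x y hx hy px py =>
      simp only [Pi.add_apply, mul_add, Finset.sum_add_distrib, px, py, add_zero]
    | smul c x hx px =>
      simp only [Pi.smul_apply, smul_eq_mul, mul_left_comm, ← Finset.mul_sum, px, mul_zero]
  intro a ha b hb
  induction ha using Submodule.span_induction with
  | mem x hx =>
    obtain ⟨S, hS, rfl⟩ := hx
    exact step1 S hS b hb
  | zero => simp
  | add x y hx hy px py =>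
    simp only [Pi.add_apply, add_mul, Finset.sum_add_distrib, px, py, add_zero]
  | smul c x hx px =>
    simp only [Pi.smul_apply, smul_eq_mul, mul_assoc, ← Finset.mul_sum, px, mul_zero]

lemma rm_le_span (r m : ℕ) :
    ReedMuller r m ≤ Submodule.span (ZMod 2) (genSet r m) := by
  intro x hx
  rw [ReedMuller, Submodule.mem_map] at hx
  obtain ⟨p, hp, rfl⟩ := hx
  rw [MvPolynomial.mem_restrictTotalDegree] at hp
  have hx : evalLM m p = ∑ d ∈ p.support, MvPolynomial.coeff d p • genVec m d.support := by
    funext v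
    show MvPolynomial.eval v p = _
    rw [MvPolynomial.eval_eq, Finset.sum_apply]
    apply Finset.sum_congr rfl
    intro d _
    rw [Pi.smul_apply, smul_eq_mul, genVec]
    congr 1
    apply Finset.prod_congr rfl
    intro i hi
    exact zmod2_pow _ (Finsupp.mem_support_iff.mp hi)
  rw [hx]
  apply Submodule.sum_mem
  intro d hd
  apply Submodule.smul_mem
  apply Submodule.subset_span
  refine ⟨d.support, ?_, rfl⟩
  have hcard : d.support.card ≤ d.sum fun _ e => e := by
    rw [Finsupp.sum]
    calc d.support.card = ∑ _i ∈ d.support, 1 := (Finset.card_eq_sum_ones _)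
      _ ≤ ∑ i ∈ d.support, d i :=
        Finset.sum_le_sum fun i hi =>
          Nat.one_le_iff_ne_zero.mpr (Finsupp.mem_support_iff.mp hi)
  exact le_trans hcard (le_trans (MvPolynomial.le_totalDegree hd) hp)

/-- Every codeword of R(3,7) has Hamming weight divisible by 4. -/
theorem reedMuller_3_7_doubly_even :
    ∀ c ∈ ReedMuller 3 7, hammingNorm c % 4 = 0 := by
  intro c hc
  have hc' := rm_le_span 3 7 hc
  clear hc
  induction hc' using Submodule.span_induction with
  | mem x hx =>
    obtain ⟨S, hS, rfl⟩ := hx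
    rw [genVec_wt]
    have hdvd : (4 : ℕ) ∣ 2 ^ (7 - S.card) :=
      dvd_trans ⟨1, rfl⟩ (pow_dvd_pow 2 (by omega : 2 ≤ 7 - S.card))
    omega
  | zero => simp [hammingNorm_zero]
  | add x y hx hy px py =>
    have key := wt_add x y
    have horth : hammingNorm (x * y) % 2 = 0 := by
      have h0 : ((hammingNorm (x * y) : ℕ) : ZMod 2) = 0 := by
        rw [wt_cast]
        exact orth_span x hx y hy
      rw [ZMod.natCast_eq_zero_iff] at h0
      omega
    omega
  | smul a x hx px =>
    rcases zmod2_cases a with h | h <;> subst h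
    · simp [hammingNorm_zero]
    · simpa using px

end
end

section
/- Let C be a self-dual binary code of even length n with minimum distance d, and suppose x ∈ GF(2)^n has even Hamming weight and satisfies x·c = 1 for every codeword c ∈ C of weight d. Set C_0 = {c ∈ C : x·c = 0}. Then C_0 is a subcode of C of dimension n/2 − 1 (index 2 in C), and for any y ∈ C \ C_0, both D_1 = C_0 + ⟨x⟩ and D_2 = C_0 + ⟨x + y⟩ are self-dual binary codes of length n that are neighbors of C, and neither D_1 nor D_2 contains any codeword of C of weight d. -/
noncomputable section

namespace NeighborAux

open Module Submodule

/-- dot product as a bilinear form -/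
def B (n : ℕ) : LinearMap.BilinForm (ZMod 2) (Fin n → ZMod 2) :=
  LinearMap.mk₂ (ZMod 2) dotProduct
    (fun a b c => add_dotProduct a b c)
    (fun s a b => smul_dotProduct s a b)
    (fun a b c => dotProduct_add a b c)
    (fun s a b => dotProduct_smul s a b)

lemma B_apply {n : ℕ} (x y : Fin n → ZMod 2) : B n x y = dotProduct x y := rfl

lemma B_refl (n : ℕ) : (B n).IsRefl := by
  intro x y h
  rw [B_apply, dotProduct_comm] at h
  exact h

lemma B_nondeg (n : ℕ) : (B n).Nondegenerate := by
  refine ⟨?_, ?_⟩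
  · intro x hx
    funext i
    have := hx (Pi.single i 1)
    rw [B_apply, dotProduct_single, mul_one] at this
    simpa using this
  · intro x hx
    funext i
    have := hx (Pi.single i 1)
    rw [B_apply, single_dotProduct, one_mul] at this
    simpa using this

lemma dualCode_eq_orthogonal {n : ℕ} (C : Submodule (ZMod 2) (Fin n → ZMod 2)) :
    dualCode C = (B n).orthogonal C := by
  ext z
  constructor
  · intro hz c hc
    have := hz c hc
    show B n c z = 0
    rw [B_apply, dotProduct_comm]
    exact this
  · intro hz c hc
    have := hz c hc
    rw [B_apply, dotProduct_comm] at this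
    exact this

lemma finrank_add_finrank_dualCode {n : ℕ} (C : Submodule (ZMod 2) (Fin n → ZMod 2)) :
    finrank (ZMod 2) C + finrank (ZMod 2) (dualCode C) = n := by
  rw [dualCode_eq_orthogonal]
  have h := LinearMap.BilinForm.finrank_add_finrank_orthogonal (B := B n) (B_refl n) C
  rw [LinearMap.BilinForm.orthogonal_top_eq_bot (B_nondeg n), inf_bot_eq, finrank_bot, add_zero] at h
  simpa [Module.finrank_fin_fun] using h

lemma dot_self {n : ℕ} (x : Fin n → ZMod 2) :
    dotProduct x x = (hammingNorm x : ZMod 2) := by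
  unfold dotProduct hammingNorm
  have h1 : ∀ i, x i * x i = x i := by
    intro i; revert i; intro i; have : ∀ a : ZMod 2, a * a = a := by decide
    exact this (x i)
  rw [Finset.sum_congr rfl fun i _ => h1 i]
  rw [← Finset.sum_filter_ne_zero]
  have h2 : ∀ i ∈ Finset.filter (fun i => x i ≠ 0) Finset.univ, x i = 1 := by
    intro i hi
    have : ∀ a : ZMod 2, a ≠ 0 → a = 1 := by decide
    exact this _ (Finset.mem_filter.1 hi).2
  rw [Finset.sum_congr rfl h2, Finset.sum_const, nsmul_eq_mul, mul_one]

lemma dot_self_zero {n : ℕ} (x : Fin n → ZMod 2) (h : Even (hammingNorm x)) :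
    dotProduct x x = 0 := by
  rw [dot_self, ZMod.natCast_eq_zero_iff]
  exact h.two_dvd

lemma finrank_inf_ker {K V : Type*} [Field K] [AddCommGroup V] [Module K V]
    [FiniteDimensional K V] (C : Submodule K V) (f : V →ₗ[K] K)
    (h : ∃ c ∈ C, f c ≠ 0) :
    finrank K ↥(C ⊓ LinearMap.ker f) + 1 = finrank K C := by
  obtain ⟨c, hc, hfc⟩ := h
  set g := f.domRestrict C with hg
  have hker : (LinearMap.ker g).map C.subtype = C ⊓ LinearMap.ker f := by
    ext z
    simp only [Submodule.mem_map, LinearMap.mem_ker, Submodule.mem_inf,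
      Submodule.coe_subtype, LinearMap.domRestrict_apply, Subtype.exists, hg]
    constructor
    · rintro ⟨a, ha, haz, rfl⟩; exact ⟨ha, haz⟩
    · rintro ⟨hz, hz0⟩; exact ⟨z, hz, hz0, rfl⟩
  have hsurj : Function.Surjective g := by
    intro a
    refine ⟨(a * (f c)⁻¹) • ⟨c, hc⟩, ?_⟩
    simp only [hg, map_smul, LinearMap.domRestrict_apply, smul_eq_mul]
    rw [mul_assoc, inv_mul_cancel₀ hfc, mul_one]
  have hrange : LinearMap.range g = ⊤ := LinearMap.range_eq_top.2 hsurj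
  have hrn := LinearMap.finrank_range_add_finrank_ker g
  rw [hrange, finrank_top, finrank_self] at hrn
  rw [← hker, Submodule.finrank_map_subtype_eq]
  omega

lemma zmod2_cases (s : ZMod 2) : s = 0 ∨ s = 1 := by revert s; decide

lemma finrank_sup_span {n : ℕ} (C0 : Submodule (ZMod 2) (Fin n → ZMod 2))
    (w : Fin n → ZMod 2) (hw : w ∉ C0) :
    finrank (ZMod 2) ↥(C0 ⊔ Submodule.span (ZMod 2) {w}) = finrank (ZMod 2) C0 + 1 := by
  have hw0 : w ≠ 0 := fun h => hw (h ▸ C0.zero_mem)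
  have h1 : finrank (ZMod 2) ↥(Submodule.span (ZMod 2) {w}) = 1 :=
    finrank_span_singleton hw0
  have h2 : C0 ⊓ Submodule.span (ZMod 2) {w} = ⊥ := by
    rw [Submodule.eq_bot_iff]
    rintro z ⟨hz, hzs⟩
    obtain ⟨s, rfl⟩ := Submodule.mem_span_singleton.1 hzs
    rcases zmod2_cases s with rfl | rfl
    · simp
    · exact absurd (by simpa using hz) hw
  have h3 := Submodule.finrank_sup_add_finrank_inf_eq C0 (Submodule.span (ZMod 2) {w})
  rw [h2, finrank_bot, h1, add_zero] at h3
  exact h3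

lemma inf_sup_span_eq {n : ℕ} (C C0 : Submodule (ZMod 2) (Fin n → ZMod 2))
    (hle : C0 ≤ C) (w : Fin n → ZMod 2) (hw : w ∉ C) :
    C ⊓ (C0 ⊔ Submodule.span (ZMod 2) {w}) = C0 := by
  apply le_antisymm
  · rintro z ⟨hzC, hzD⟩
    obtain ⟨c, hc, u, hu, rfl⟩ := Submodule.mem_sup.1 hzD
    obtain ⟨s, rfl⟩ := Submodule.mem_span_singleton.1 hu
    rcases zmod2_cases s with rfl | rfl
    · simpa using hc
    · exfalso
      apply hw
      have := Submodule.sub_mem C hzC (hle hc)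
      simpa using this
  · exact le_inf hle le_sup_left

lemma sup_span_le_dualCode {n : ℕ} (C0 : Submodule (ZMod 2) (Fin n → ZMod 2))
    (hC0 : ∀ a ∈ C0, ∀ b ∈ C0, dotProduct a b = 0)
    (w : Fin n → ZMod 2) (hw : dotProduct w w = 0)
    (hwC0 : ∀ c ∈ C0, dotProduct w c = 0) :
    C0 ⊔ Submodule.span (ZMod 2) {w} ≤ dualCode (C0 ⊔ Submodule.span (ZMod 2) {w}) := by
  intro a ha
  intro b hb
  obtain ⟨c1, hc1, u, hu, rfl⟩ := Submodule.mem_sup.1 ha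
  obtain ⟨s, rfl⟩ := Submodule.mem_span_singleton.1 hu
  obtain ⟨c2, hc2, v, hv, rfl⟩ := Submodule.mem_sup.1 hb
  obtain ⟨t, rfl⟩ := Submodule.mem_span_singleton.1 hv
  have h1 : dotProduct c1 w = 0 := by
    rw [dotProduct_comm]; exact hwC0 c1 hc1
  simp only [add_dotProduct, dotProduct_add, smul_dotProduct,
    dotProduct_smul, hC0 c1 hc1 c2 hc2, hw, hwC0 c2 hc2, h1, smul_zero,
    add_zero, zero_add]

end NeighborAux

/-- A vector x of even weight with x·c = 1 for all minimum-weight codewords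
of a self-dual code C yields, via the index-2 subcode C₀ = {c ∈ C : x·c = 0}, two
self-dual neighbors of C avoiding all minimum-weight codewords of C. -/
theorem neighbor_construction
    (n : ℕ) (hn : Even n)
    (C : Submodule (ZMod 2) (Fin n → ZMod 2)) (hC : dualCode C = C)
    (d : ℕ) (hd : IsMinDist C d)
    (x : Fin n → ZMod 2) (hxeven : Even (hammingNorm x))
    (hx : ∀ c ∈ C, hammingNorm c = d → dotProduct x c = 1)
    (C0 : Submodule (ZMod 2) (Fin n → ZMod 2)) (hC0 : C0 = C ⊓ perpVec x) :
    Module.finrank (ZMod 2) ↥C0 = n / 2 - 1 ∧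
    ∀ y, y ∈ C → y ∉ C0 →
      ∀ D1 D2 : Submodule (ZMod 2) (Fin n → ZMod 2),
        D1 = C0 ⊔ Submodule.span (ZMod 2) {x} →
        D2 = C0 ⊔ Submodule.span (ZMod 2) {x + y} →
        dualCode D1 = D1 ∧ dualCode D2 = D2 ∧
        Module.finrank (ZMod 2) ↥(C ⊓ D1) = n / 2 - 1 ∧
        Module.finrank (ZMod 2) ↥(C ⊓ D2) = n / 2 - 1 ∧
        ∀ c ∈ C, hammingNorm c = d → c ∉ D1 ∧ c ∉ D2 := by
  classical
  subst hC0
  obtain ⟨⟨cmin, hcminC, hcmin0, hcmind⟩, hdmin⟩ := hd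
  -- x is not in C
  have hxC : x ∉ C := by
    intro hxC
    rw [← hC] at hxC
    have h0 : dotProduct x cmin = 0 := hxC cmin hcminC
    rw [hx cmin hcminC hcmind] at h0
    exact one_ne_zero h0
  -- dimension of C is n/2
  have hfA := NeighborAux.finrank_add_finrank_dualCode C
  rw [hC] at hfA
  have hCposrank : 0 < Module.finrank (ZMod 2) C := by
    rw [Nat.pos_iff_ne_zero]
    intro h
    have : C = ⊥ := Submodule.finrank_eq_zero.1 h
    exact hcmin0 (by simpa [this] using hcminC)
  have hfC : Module.finrank (ZMod 2) C = n / 2 := by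
    obtain ⟨k, hk⟩ := hn; omega
  have hn2 : 1 ≤ n / 2 := hfC ▸ hCposrank
  -- some x·c is nonzero on C
  have hex : ∃ c ∈ C, NeighborAux.B n x c ≠ 0 := by
    by_contra h
    push_neg at h
    exact hxC (hC ▸ (fun c hc => h c hc : x ∈ dualCode C))
  -- C ⊓ perpVec x is the kernel intersection
  have hperp : C ⊓ perpVec x = C ⊓ LinearMap.ker (NeighborAux.B n x) := by
    ext c; exact Iff.rfl
  have hfC0 : Module.finrank (ZMod 2) ↥(C ⊓ perpVec x) = n / 2 - 1 := by
    have := NeighborAux.finrank_inf_ker C (NeighborAux.B n x) hex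
    rw [← hperp, hfC] at this
    omega
  refine ⟨hfC0, ?_⟩
  intro y hyC hyC0 D1 D2 hD1 hD2
  subst hD1; subst hD2
  set C0 := C ⊓ perpVec x with hC0def
  have hC0leC : C0 ≤ C := inf_le_left
  have hC0perp : ∀ c ∈ C0, dotProduct x c = 0 := fun c hc => hc.2
  have hpair : ∀ a ∈ C0, ∀ b ∈ C0, dotProduct a b = 0 := by
    intro a ha b hb
    have haD : a ∈ dualCode C := hC.symm ▸ hC0leC ha
    exact haD b (hC0leC hb)
  have hyd : y ∈ dualCode C := hC.symm ▸ hyC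
  have hxx : dotProduct x x = 0 := NeighborAux.dot_self_zero x hxeven
  have hxyC : x + y ∉ C := by
    intro h
    apply hxC
    have := C.sub_mem h hyC
    simpa using this
  have hxC0 : x ∉ C0 := fun h => hxC (hC0leC h)
  have hxyC0 : x + y ∉ C0 := fun h => hxyC (hC0leC h)
  -- orthogonality generators for D2
  have hw2 : dotProduct (x + y) (x + y) = 0 := by
    rw [add_dotProduct, dotProduct_add, dotProduct_add, hxx,
      hyd y hyC, dotProduct_comm y x, zero_add, add_zero]
    exact CharTwo.add_self_eq_zero _
  have hw2C0 : ∀ c ∈ C0, dotProduct (x + y) c = 0 := by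
    intro c hc
    rw [add_dotProduct, hC0perp c hc, hyd c (hC0leC hc), add_zero]
  -- dimensions of D1, D2
  have hfD1 : Module.finrank (ZMod 2) ↥(C0 ⊔ Submodule.span (ZMod 2) {x}) = n / 2 := by
    rw [NeighborAux.finrank_sup_span C0 x hxC0, hfC0]; omega
  have hfD2 : Module.finrank (ZMod 2) ↥(C0 ⊔ Submodule.span (ZMod 2) {x + y}) = n / 2 := by
    rw [NeighborAux.finrank_sup_span C0 (x + y) hxyC0, hfC0]; omega
  -- self-duality
  have hselfdual : ∀ D : Submodule (ZMod 2) (Fin n → ZMod 2),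
      D ≤ dualCode D → Module.finrank (ZMod 2) D = n / 2 → dualCode D = D := by
    intro D hle hfr
    have h := NeighborAux.finrank_add_finrank_dualCode D
    exact (Submodule.eq_of_le_of_finrank_le hle (by omega)).symm
  have hsd1 : dualCode (C0 ⊔ Submodule.span (ZMod 2) {x}) =
      C0 ⊔ Submodule.span (ZMod 2) {x} :=
    hselfdual _ (NeighborAux.sup_span_le_dualCode C0 hpair x hxx hC0perp) hfD1
  have hsd2 : dualCode (C0 ⊔ Submodule.span (ZMod 2) {x + y}) =
      C0 ⊔ Submodule.span (ZMod 2) {x + y} :=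
    hselfdual _ (NeighborAux.sup_span_le_dualCode C0 hpair (x + y) hw2 hw2C0) hfD2
  -- intersections with C
  have hint1 : C ⊓ (C0 ⊔ Submodule.span (ZMod 2) {x}) = C0 :=
    NeighborAux.inf_sup_span_eq C C0 hC0leC x hxC
  have hint2 : C ⊓ (C0 ⊔ Submodule.span (ZMod 2) {x + y}) = C0 :=
    NeighborAux.inf_sup_span_eq C C0 hC0leC (x + y) hxyC
  refine ⟨hsd1, hsd2, by rw [hint1]; exact hfC0, by rw [hint2]; exact hfC0, ?_⟩
  intro c hcC hcd
  have hcx : dotProduct x c = 1 := hx c hcC hcd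
  have hcnotC0 : c ∉ C0 := by
    intro h
    rw [hC0perp c h] at hcx
    exact zero_ne_one hcx
  constructor
  · intro h
    exact hcnotC0 (hint1 ▸ (⟨hcC, h⟩ : c ∈ C ⊓ _))
  · intro h
    exact hcnotC0 (hint2 ▸ (⟨hcC, h⟩ : c ∈ C ⊓ _))


end
end

section
/- There is no vector x ∈ GF(2)^128 such that x·c = 1 for every codeword c of Hamming weight 16 in the 3rd order Reed-Muller code R(3,7). -/
noncomputable section

open MvPolynomial in
lemma aux_mem_rm37 (i j k : Fin 7) :
    (fun v : Fin 7 → ZMod 2 => v i * v j * v k) ∈ ReedMuller 3 7 := by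
  refine ⟨X i * X j * X k, ?_, ?_⟩
  · rw [SetLike.mem_coe, MvPolynomial.mem_restrictTotalDegree]
    calc (X i * X j * X k : MvPolynomial (Fin 7) (ZMod 2)).totalDegree
        ≤ (X i * X j : MvPolynomial (Fin 7) (ZMod 2)).totalDegree
            + (X k : MvPolynomial (Fin 7) (ZMod 2)).totalDegree := totalDegree_mul _ _
      _ ≤ ((X i : MvPolynomial (Fin 7) (ZMod 2)).totalDegree
            + (X j : MvPolynomial (Fin 7) (ZMod 2)).totalDegree)
            + (X k : MvPolynomial (Fin 7) (ZMod 2)).totalDegree :=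
          add_le_add (totalDegree_mul _ _) le_rfl
      _ ≤ 3 := by simp [totalDegree_X]
  · funext v; simp [evalLM]

/-- No vector of GF(2)^128 has dot product 1 with every weight-16
codeword of R(3,7). -/
theorem reedMuller_3_7_no_solution :
    ¬ ∃ x : (Fin 7 → ZMod 2) → ZMod 2,
        ∀ c ∈ ReedMuller 3 7, hammingNorm c = 16 → dotProduct x c = 1 := by
  rintro ⟨x, h⟩
  set c1 : (Fin 7 → ZMod 2) → ZMod 2 := fun v => v 0 * v 1 * v 2 with hc1
  set c2 : (Fin 7 → ZMod 2) → ZMod 2 := fun v => v 0 * v 1 * v 3 with hc2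
  have h1 := h c1 (aux_mem_rm37 0 1 2) (by decide)
  have h2 := h c2 (aux_mem_rm37 0 1 3) (by decide)
  have hsum : c1 + c2 ∈ ReedMuller 3 7 :=
    Submodule.add_mem _ (aux_mem_rm37 0 1 2) (aux_mem_rm37 0 1 3)
  have h3 := h (c1 + c2) hsum (by decide)
  rw [dotProduct_add, h1, h2] at h3
  exact absurd h3 (by decide)

end
end

section
/- Let C be a doubly-even self-dual binary code of length 32 with minimum distance 8 (an extremal doubly-even self-dual [32,16,8] code). Then the weight distribution of C is uniquely determined: A_0 = 1, A_8 = 620, A_12 = 13888, A_16 = 36518, A_20 = 13888, A_24 = 620, A_32 = 1, and A_i = 0 for all other i. -/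
noncomputable section

set_option maxHeartbeats 1000000
set_option maxRecDepth 10000

open Finset in
lemma extremal32_fiber_card (C : Submodule (ZMod 2) (Fin 32 → ZMod 2))
    (hself : dualCode C = C) (hmin : IsMinDist C 8)
    (S : Finset (Fin 32)) (hS : S.card ≤ 7) :
    Nat.card {c : Fin 32 → ZMod 2 // c ∈ C ∧ ∀ j ∈ S, c j = 1} * 2 ^ S.card
      = Nat.card C := by
  classical
  set f : C →ₗ[ZMod 2] (S → ZMod 2) :=
    LinearMap.pi (fun j => (LinearMap.proj (φ := fun _ : Fin 32 => ZMod 2) (j : Fin 32)).comp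
      C.subtype) with hfdef
  have hfapp : ∀ (c : C) (j : S), f c j = (c : Fin 32 → ZMod 2) j := fun c j => rfl
  have hsurj : Function.Surjective f := by
    rw [← LinearMap.range_eq_top]
    by_contra hne
    obtain ⟨φ, hφ0, hφ⟩ := Submodule.exists_dual_map_eq_bot_of_lt_top
      (p := LinearMap.range f) (lt_top_iff_ne_top.mpr hne) inferInstance
    set y : Fin 32 → ZMod 2 :=
      fun j => if h : j ∈ S then φ (fun j' => if (⟨j, h⟩ : S) = j' then 1 else 0) else 0 with hy
    have hφr : ∀ v ∈ LinearMap.range f, φ v = 0 := by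
      intro v hv
      have : φ v ∈ Submodule.map φ (LinearMap.range f) := Submodule.mem_map_of_mem hv
      rw [hφ] at this
      exact (Submodule.mem_bot _).mp this
    have hdot : ∀ c ∈ C, dotProduct y c = 0 := by
      intro c hc
      have h1 : dotProduct y c = φ (f ⟨c, hc⟩) := by
        rw [dotProduct]
        rw [LinearMap.pi_apply_eq_sum_univ φ (f ⟨c, hc⟩)]
        rw [← Finset.sum_subset (Finset.subset_univ S) (by
          intro j _ hj
          simp [hy, hj])]
        rw [← Finset.sum_attach S (fun j => y j * c j)]
        refine Finset.sum_congr rfl fun j _ => ?_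
        simp only [hy, dif_pos j.2]
        rw [hfapp]
        rw [smul_eq_mul, mul_comm]
      rw [h1, hφr _ (LinearMap.mem_range_self f _)]
    have hyC : y ∈ C := by rw [← hself]; exact hdot
    have hy0 : y ≠ 0 := by
      intro h0
      apply hφ0
      refine LinearMap.ext fun v => ?_
      rw [LinearMap.pi_apply_eq_sum_univ φ v]
      have : ∀ j : S, φ (fun j' => if j = j' then 1 else 0) = 0 := by
        intro j
        have := congrFun h0 (j : Fin 32)
        simpa [hy, dif_pos j.2] using this
      simp [this]
    have hle : hammingNorm y ≤ S.card := by
      refine le_trans (Finset.card_le_card ?_) le_rfl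
      intro j hj
      simp only [mem_filter, Finset.mem_univ, true_and] at hj
      by_contra hjS
      exact hj (by simp [hy, hjS])
    have := hmin.2 y hyC hy0
    omega
  -- cardinalities
  have hquot : Nat.card C = Nat.card (LinearMap.ker f) * Nat.card (↥C ⧸ LinearMap.ker f) :=
    Submodule.card_eq_card_quotient_mul_card _
  have hq2 : Nat.card (↥C ⧸ LinearMap.ker f) = 2 ^ S.card := by
    rw [Nat.card_congr (f.quotKerEquivOfSurjective hsurj).toEquiv, Nat.card_fun]
    simp [Nat.card_eq_fintype_card, Fintype.card_coe]
  obtain ⟨c₀, hc₀⟩ := hsurj (fun _ => 1)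
  have hfib : Nat.card {c : Fin 32 → ZMod 2 // c ∈ C ∧ ∀ j ∈ S, c j = 1}
      = Nat.card (LinearMap.ker f) := by
    refine Nat.card_congr ?_
    refine
      { toFun := fun c => ⟨⟨c.1, c.2.1⟩ - c₀, ?_⟩
        invFun := fun k => ⟨(↑(k.1 + c₀) : Fin 32 → ZMod 2), (k.1 + c₀).2, ?_⟩
        left_inv := ?_
        right_inv := ?_ }
    · rw [LinearMap.mem_ker, map_sub, hc₀]
      have : f ⟨c.1, c.2.1⟩ = fun _ => 1 := by
        funext j
        rw [hfapp]
        exact c.2.2 j j.2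
      rw [this, sub_self]
    · intro j hj
      have hk : f k.1 = 0 := k.2
      have : (↑(k.1 + c₀) : Fin 32 → ZMod 2) j = f k.1 ⟨j, hj⟩ + f c₀ ⟨j, hj⟩ := by
        rw [hfapp k.1 ⟨j, hj⟩, hfapp c₀ ⟨j, hj⟩]; rfl
      rw [this, hk, hc₀]
      simp
    · intro c
      ext1
      simp
    · intro k
      refine Subtype.ext (Subtype.ext ?_)
      push_cast
      simp
  rw [hfib, hquot, hq2]

open Finset in
lemma extremal32_card_subtype_eq (p : (Fin 32 → ZMod 2) → Prop) [DecidablePred p] :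
    Nat.card {c : Fin 32 → ZMod 2 // p c} = (univ.filter p).card := by
  rw [Nat.card_eq_fintype_card, Fintype.card_subtype]

lemma extremal32_zmod2_ne_zero : ∀ x : ZMod 2, x ≠ 0 ↔ x = 1 := by decide

open Finset in
lemma extremal32_choose_eq (c : Fin 32 → ZMod 2) (k : ℕ) :
    (hammingNorm c).choose k
      = ((univ.powersetCard k).filter (fun S => ∀ j ∈ S, c j = 1)).card := by
  classical
  have hsupp : hammingNorm c = (univ.filter (fun j => c j = 1)).card := by
    unfold hammingNorm
    congr 1
    ext j
    simp [extremal32_zmod2_ne_zero]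
  rw [hsupp, ← Finset.card_powersetCard]
  congr 1
  ext T
  simp only [Finset.mem_powersetCard, Finset.mem_filter]
  constructor
  · rintro ⟨hsub, hcard⟩
    refine ⟨⟨fun j hj => Finset.mem_univ j, hcard⟩, fun j hj => ?_⟩
    · simpa using (Finset.mem_filter.mp (hsub hj)).2
  · rintro ⟨⟨_, hcard⟩, hall⟩
    exact ⟨fun j hj => Finset.mem_filter.mpr ⟨Finset.mem_univ j, hall j hj⟩, hcard⟩

open Finset in
lemma extremal32_group_by (C : Submodule (ZMod 2) (Fin 32 → ZMod 2))
    [DecidablePred (· ∈ C)] (g : ℕ → ℕ) :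
    (∑ c ∈ univ.filter (fun c : Fin 32 → ZMod 2 => c ∈ C), g (hammingNorm c))
      = ∑ i ∈ range 33, g i * wtDist C i := by
  classical
  have hmaps : ∀ c ∈ univ.filter (fun c : Fin 32 → ZMod 2 => c ∈ C),
      hammingNorm c ∈ range 33 := by
    intro c _
    have := hammingNorm_le_card_fintype (x := c)
    simp only [Fintype.card_fin] at this
    exact mem_range.mpr (by omega)
  rw [← Finset.sum_fiberwise_of_maps_to hmaps (fun c => g (hammingNorm c))]
  refine Finset.sum_congr rfl fun i _ => ?_
  have h1 : ∀ c ∈ (univ.filter (fun c : Fin 32 → ZMod 2 => c ∈ C)).filter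
      (fun c => hammingNorm c = i), g (hammingNorm c) = g i := by
    intro c hc
    rw [(Finset.mem_filter.mp hc).2]
  rw [Finset.sum_congr rfl h1, Finset.sum_const, smul_eq_mul, mul_comm]
  congr 1
  rw [wtDist, ← Set.ncard_coe_finset]
  congr 1
  ext c
  simp [Finset.filter_filter, and_assoc]

open Finset in
lemma extremal32_moment (C : Submodule (ZMod 2) (Fin 32 → ZMod 2))
    (hself : dualCode C = C) (hmin : IsMinDist C 8)
    [DecidablePred (· ∈ C)] (k : ℕ) (hk : k ≤ 7) :
    2 ^ k * ∑ c ∈ univ.filter (fun c : Fin 32 → ZMod 2 => c ∈ C), (hammingNorm c).choose k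
      = Nat.choose 32 k * (univ.filter (fun c : Fin 32 → ZMod 2 => c ∈ C)).card := by
  classical
  calc 2 ^ k * ∑ c ∈ univ.filter (fun c : Fin 32 → ZMod 2 => c ∈ C), (hammingNorm c).choose k
      = 2 ^ k * ∑ c ∈ univ.filter (fun c : Fin 32 → ZMod 2 => c ∈ C),
          ∑ S ∈ univ.powersetCard k, (if ∀ j ∈ S, c j = 1 then 1 else 0) := by
        congr 1
        refine Finset.sum_congr rfl fun c _ => ?_
        rw [extremal32_choose_eq c k, Finset.card_filter]
    _ = 2 ^ k * ∑ S ∈ univ.powersetCard k,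
          ∑ c ∈ univ.filter (fun c : Fin 32 → ZMod 2 => c ∈ C),
            (if ∀ j ∈ S, c j = 1 then 1 else 0) := by rw [Finset.sum_comm]
    _ = ∑ S ∈ univ.powersetCard k,
          (univ.filter (fun c : Fin 32 → ZMod 2 => c ∈ C ∧ ∀ j ∈ S, c j = 1)).card
            * 2 ^ S.card := by
        rw [Finset.mul_sum]
        refine Finset.sum_congr rfl fun S hS => ?_
        have hcard : S.card = k := (Finset.mem_powersetCard_univ.mp hS)
        rw [← Finset.card_filter, Finset.filter_filter, hcard, mul_comm]
    _ = ∑ S ∈ univ.powersetCard k,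
          (univ.filter (fun c : Fin 32 → ZMod 2 => c ∈ C)).card := by
        refine Finset.sum_congr rfl fun S hS => ?_
        have hcard : S.card = k := (Finset.mem_powersetCard_univ.mp hS)
        have h1 := extremal32_fiber_card C hself hmin S (by omega)
        rw [extremal32_card_subtype_eq] at h1
        rw [h1]
        have : Nat.card C = Nat.card {c : Fin 32 → ZMod 2 // c ∈ C} := rfl
        rw [this, extremal32_card_subtype_eq]
    _ = Nat.choose 32 k * (univ.filter (fun c : Fin 32 → ZMod 2 => c ∈ C)).card := by
        rw [Finset.sum_const, Finset.card_powersetCard, Finset.card_univ, Fintype.card_fin,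
          smul_eq_mul]


open Finset in
/-- An extremal doubly-even self-dual [32,16,8] code has a uniquely
determined weight distribution. -/
theorem extremal_32_weight_distribution
    (C : Submodule (ZMod 2) (Fin 32 → ZMod 2))
    (hself : dualCode C = C)
    (hde : ∀ c ∈ C, hammingNorm c % 4 = 0)
    (hmin : IsMinDist C 8) :
    wtDist C 0 = 1 ∧ wtDist C 8 = 620 ∧ wtDist C 12 = 13888 ∧ wtDist C 16 = 36518 ∧
    wtDist C 20 = 13888 ∧ wtDist C 24 = 620 ∧ wtDist C 32 = 1 ∧
    ∀ i : ℕ, i ∉ ({0, 8, 12, 16, 20, 24, 32} : Finset ℕ) → wtDist C i = 0 := by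
  classical
  have hempty : ∀ i : ℕ, (∀ c, ¬(c ∈ C ∧ hammingNorm c = i)) → wtDist C i = 0 := by
    intro i h
    rw [wtDist, Set.ncard_eq_zero (Set.toFinite _)]
    ext c
    simp only [Set.mem_setOf_eq, Set.mem_empty_iff_false, iff_false]
    exact h c
  have h0 : wtDist C 0 = 1 := by
    rw [wtDist]
    have : {c : Fin 32 → ZMod 2 | c ∈ C ∧ hammingNorm c = 0} = {0} := by
      ext c
      simp only [Set.mem_setOf_eq, Set.mem_singleton_iff, hammingNorm_eq_zero]
      exact ⟨fun h => h.2, fun h => ⟨h ▸ C.zero_mem, h⟩⟩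
    rw [this, Set.ncard_singleton]
  have hbig : ∀ i, 32 < i → wtDist C i = 0 := by
    intro i hi
    refine hempty i fun c ⟨_, hw⟩ => ?_
    have := hammingNorm_le_card_fintype (x := c)
    simp only [Fintype.card_fin] at this
    omega
  have h4 : wtDist C 4 = 0 := by
    refine hempty 4 fun c ⟨hc, hw⟩ => ?_
    have hne : c ≠ 0 := by
      intro h
      rw [h, hammingNorm_zero] at hw
      omega
    have := hmin.2 c hc hne
    omega
  have hzero' : ∀ i, i ≤ 32 → i ∉ ({0, 8, 12, 16, 20, 24, 28, 32} : Finset ℕ) →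
      wtDist C i = 0 := by
    intro i h1 h2
    simp only [Finset.mem_insert, Finset.mem_singleton] at h2
    push_neg at h2
    rcases eq_or_ne (i % 4) 0 with hm | hm
    · have : i = 4 := by omega
      rw [this]; exact h4
    · refine hempty i fun c ⟨hc, hw⟩ => hm (hw ▸ hde c hc)
  have hsum : ∀ g : ℕ → ℕ, (∑ i ∈ range 33, g i * wtDist C i)
      = g 0 * wtDist C 0 + g 8 * wtDist C 8 + g 12 * wtDist C 12 + g 16 * wtDist C 16
        + g 20 * wtDist C 20 + g 24 * wtDist C 24 + g 28 * wtDist C 28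
        + g 32 * wtDist C 32 := by
    intro g
    rw [← Finset.sum_subset
      (s₁ := ({0, 8, 12, 16, 20, 24, 28, 32} : Finset ℕ)) (by decide)
      (fun x hx hnx => by
        rw [hzero' x (by simp only [Finset.mem_range] at hx; omega) hnx, mul_zero])]
    norm_num [Finset.sum_insert, Finset.mem_insert]
    ring
  set M := (univ.filter (fun c : Fin 32 → ZMod 2 => c ∈ C)).card with hM
  have E : ∀ k, k ≤ 7 →
      2 ^ k * (∑ i ∈ range 33, Nat.choose i k * wtDist C i)
        = Nat.choose 32 k * M := by
    intro k hk
    rw [← extremal32_group_by C (fun i => i.choose k)]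
    exact extremal32_moment C hself hmin k hk
  have E0 := E 0 (by norm_num)
  have E1 := E 1 (by norm_num)
  have E2 := E 2 (by norm_num)
  have E3 := E 3 (by norm_num)
  have E4 := E 4 (by norm_num)
  have E5 := E 5 (by norm_num)
  have E6 := E 6 (by norm_num)
  have E7 := E 7 (by norm_num)
  rw [hsum] at E0 E1 E2 E3 E4 E5 E6 E7
  rw [h0] at E0 E1 E2 E3 E4 E5 E6 E7
  have hch_0_0 : Nat.choose 0 0 = 1 := by decide
  have hch_8_0 : Nat.choose 8 0 = 1 := by decide
  have hch_12_0 : Nat.choose 12 0 = 1 := by decide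
  have hch_16_0 : Nat.choose 16 0 = 1 := by decide
  have hch_20_0 : Nat.choose 20 0 = 1 := by decide
  have hch_24_0 : Nat.choose 24 0 = 1 := by decide
  have hch_28_0 : Nat.choose 28 0 = 1 := by decide
  have hch_32_0 : Nat.choose 32 0 = 1 := by decide
  have hch_0_1 : Nat.choose 0 1 = 0 := by decide
  have hch_8_1 : Nat.choose 8 1 = 8 := by decide
  have hch_12_1 : Nat.choose 12 1 = 12 := by decide
  have hch_16_1 : Nat.choose 16 1 = 16 := by decide
  have hch_20_1 : Nat.choose 20 1 = 20 := by decide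
  have hch_24_1 : Nat.choose 24 1 = 24 := by decide
  have hch_28_1 : Nat.choose 28 1 = 28 := by decide
  have hch_32_1 : Nat.choose 32 1 = 32 := by decide
  have hch_0_2 : Nat.choose 0 2 = 0 := by decide
  have hch_8_2 : Nat.choose 8 2 = 28 := by decide
  have hch_12_2 : Nat.choose 12 2 = 66 := by decide
  have hch_16_2 : Nat.choose 16 2 = 120 := by decide
  have hch_20_2 : Nat.choose 20 2 = 190 := by decide
  have hch_24_2 : Nat.choose 24 2 = 276 := by decide
  have hch_28_2 : Nat.choose 28 2 = 378 := by decide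
  have hch_32_2 : Nat.choose 32 2 = 496 := by decide
  have hch_0_3 : Nat.choose 0 3 = 0 := by decide
  have hch_8_3 : Nat.choose 8 3 = 56 := by decide
  have hch_12_3 : Nat.choose 12 3 = 220 := by decide
  have hch_16_3 : Nat.choose 16 3 = 560 := by decide
  have hch_20_3 : Nat.choose 20 3 = 1140 := by decide
  have hch_24_3 : Nat.choose 24 3 = 2024 := by decide
  have hch_28_3 : Nat.choose 28 3 = 3276 := by decide
  have hch_32_3 : Nat.choose 32 3 = 4960 := by decide
  have hch_0_4 : Nat.choose 0 4 = 0 := by decide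
  have hch_8_4 : Nat.choose 8 4 = 70 := by decide
  have hch_12_4 : Nat.choose 12 4 = 495 := by decide
  have hch_16_4 : Nat.choose 16 4 = 1820 := by decide
  have hch_20_4 : Nat.choose 20 4 = 4845 := by decide
  have hch_24_4 : Nat.choose 24 4 = 10626 := by decide
  have hch_28_4 : Nat.choose 28 4 = 20475 := by decide
  have hch_32_4 : Nat.choose 32 4 = 35960 := by decide
  have hch_0_5 : Nat.choose 0 5 = 0 := by decide
  have hch_8_5 : Nat.choose 8 5 = 56 := by decide
  have hch_12_5 : Nat.choose 12 5 = 792 := by decide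
  have hch_16_5 : Nat.choose 16 5 = 4368 := by decide
  have hch_20_5 : Nat.choose 20 5 = 15504 := by decide
  have hch_24_5 : Nat.choose 24 5 = 42504 := by decide
  have hch_28_5 : Nat.choose 28 5 = 98280 := by decide
  have hch_32_5 : Nat.choose 32 5 = 201376 := by decide
  have hch_0_6 : Nat.choose 0 6 = 0 := by decide
  have hch_8_6 : Nat.choose 8 6 = 28 := by decide
  have hch_12_6 : Nat.choose 12 6 = 924 := by decide
  have hch_16_6 : Nat.choose 16 6 = 8008 := by decide
  have hch_20_6 : Nat.choose 20 6 = 38760 := by decide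
  have hch_24_6 : Nat.choose 24 6 = 134596 := by decide
  have hch_28_6 : Nat.choose 28 6 = 376740 := by decide
  have hch_32_6 : Nat.choose 32 6 = 906192 := by decide
  have hch_0_7 : Nat.choose 0 7 = 0 := by decide
  have hch_8_7 : Nat.choose 8 7 = 8 := by decide
  have hch_12_7 : Nat.choose 12 7 = 792 := by decide
  have hch_16_7 : Nat.choose 16 7 = 11440 := by decide
  have hch_20_7 : Nat.choose 20 7 = 77520 := by decide
  have hch_24_7 : Nat.choose 24 7 = 346104 := by decide
  have hch_28_7 : Nat.choose 28 7 = 1184040 := by decide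
  have hch_32_7 : Nat.choose 32 7 = 3365856 := by decide
  simp only [hch_0_0, hch_8_0, hch_12_0, hch_16_0, hch_20_0, hch_24_0, hch_28_0, hch_32_0, hch_0_1, hch_8_1, hch_12_1, hch_16_1, hch_20_1, hch_24_1, hch_28_1, hch_32_1, hch_0_2, hch_8_2, hch_12_2, hch_16_2, hch_20_2, hch_24_2, hch_28_2, hch_32_2, hch_0_3, hch_8_3, hch_12_3, hch_16_3, hch_20_3, hch_24_3, hch_28_3, hch_32_3, hch_0_4, hch_8_4, hch_12_4, hch_16_4, hch_20_4, hch_24_4, hch_28_4, hch_32_4, hch_0_5, hch_8_5, hch_12_5, hch_16_5, hch_20_5, hch_24_5, hch_28_5, hch_32_5, hch_0_6, hch_8_6, hch_12_6, hch_16_6, hch_20_6, hch_24_6, hch_28_6, hch_32_6, hch_0_7, hch_8_7, hch_12_7, hch_16_7, hch_20_7, hch_24_7, hch_28_7, hch_32_7] at E0 E1 E2 E3 E4 E5 E6 E7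
  have key : wtDist C 8 = 620 ∧ wtDist C 12 = 13888 ∧ wtDist C 16 = 36518 ∧
      wtDist C 20 = 13888 ∧ wtDist C 24 = 620 ∧ wtDist C 28 = 0 ∧ wtDist C 32 = 1 := by
    clear_value M
    clear hM hempty h0 hbig h4 hzero' hsum E
    revert E0 E1 E2 E3 E4 E5 E6 E7
    generalize wtDist C 8 = a8
    generalize wtDist C 12 = a12
    generalize wtDist C 16 = a16
    generalize wtDist C 20 = a20
    generalize wtDist C 24 = a24
    generalize wtDist C 28 = a28
    generalize wtDist C 32 = a32
    intro E0 E1 E2 E3 E4 E5 E6 E7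
    zify at E0 E1 E2 E3 E4 E5 E6 E7
    have h_a8 : (2097152 : ℤ) * a8 = 2097152 * 620 := by linear_combination (-1300234240 : ℤ) * E0 + (237041996 : ℤ) * E1 + (-37731916 : ℤ) * E2 + (5102762 : ℤ) * E3 + (-563336 : ℤ) * E4 + (47640 : ℤ) * E5 + (-2746 : ℤ) * E6 + (81 : ℤ) * E7
    have h_a12 : (1048576 : ℤ) * a12 = 1048576 * 13888 := by linear_combination (-14562623488 : ℤ) * E0 + (2621414684 : ℤ) * E1 + (-412973596 : ℤ) * E2 + (55379842 : ℤ) * E3 + (-6071912 : ℤ) * E4 + (510616 : ℤ) * E5 + (-29298 : ℤ) * E6 + (861 : ℤ) * E7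
    have h_a16 : (2097152 : ℤ) * a16 = 2097152 * 36518 := by linear_combination (-76583796736 : ℤ) * E0 + (13813173812 : ℤ) * E1 + (-2180833588 : ℤ) * E2 + (293095190 : ℤ) * E3 + (-32203640 : ℤ) * E4 + (2713512 : ℤ) * E5 + (-155974 : ℤ) * E6 + (4591 : ℤ) * E7
    have h_a20 : (524288 : ℤ) * a20 = 524288 * 13888 := by linear_combination (-7281311744 : ℤ) * E0 + (1310437828 : ℤ) * E1 + (-206345412 : ℤ) * E2 + (27646990 : ℤ) * E3 + (-3027416 : ℤ) * E4 + (254184 : ℤ) * E5 + (-14558 : ℤ) * E6 + (427 : ℤ) * E7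
    have h_a24 : (2097152 : ℤ) * a24 = 2097152 * 620 := by linear_combination (-1300234240 : ℤ) * E0 + (238441460 : ℤ) * E1 + (-38432500 : ℤ) * E2 + (5296310 : ℤ) * E3 + (-599288 : ℤ) * E4 + (52200 : ℤ) * E5 + (-3110 : ℤ) * E6 + (95 : ℤ) * E7
    have h_a28 : (1048576 : ℤ) * a28 = 1048576 * 0 := by linear_combination (0 : ℤ) * E0 + (-596068 : ℤ) * E1 + (215908 : ℤ) * E2 + (-49854 : ℤ) * E3 + (8344 : ℤ) * E4 + (-1000 : ℤ) * E5 + (78 : ℤ) * E6 + (-3 : ℤ) * E7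
    have h_a32 : (2097152 : ℤ) * a32 = 2097152 * 1 := by linear_combination (-2097152 : ℤ) * E0 + (529420 : ℤ) * E1 + (-114956 : ℤ) * E2 + (20938 : ℤ) * E3 + (-3080 : ℤ) * E4 + (344 : ℤ) * E5 + (-26 : ℤ) * E6 + (1 : ℤ) * E7
    clear E0 E1 E2 E3 E4 E5 E6 E7
    refine ⟨?_, ?_, ?_, ?_, ?_, ?_, ?_⟩ <;> omega
  obtain ⟨h8, h12, h16, h20, h24, h28, h32⟩ := key
  refine ⟨h0, h8, h12, h16, h20, h24, h32, ?_⟩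
  intro i hi
  simp only [Finset.mem_insert, Finset.mem_singleton] at hi
  push_neg at hi
  rcases Nat.lt_or_ge 32 i with h | h
  · exact hbig i h
  · by_cases hm : i ∉ ({0, 8, 12, 16, 20, 24, 28, 32} : Finset ℕ)
    · exact hzero' i h hm
    · push_neg at hm
      simp only [Finset.mem_insert, Finset.mem_singleton] at hm
      have : i = 28 := by omega
      rw [this]; exact h28

end
end
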